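/- Let X be a proper geodesic metric space, and let f_n, f be positive, proper, F(-1)-convex functions on X with f_n → f uniformly on compact sets. Let x_n be the unique minimizer of f_n and x the unique minimizer of f. Then x_n → x. -/

import Mathlib

open Set Filter Topology

/-- A unit-speed geodesic segment parametrized on `[-d, d]`. -/
def IsGeodesicOn {X : Type*} [MetricSpace X] (γ : ℝ → X) (d : ℝ) : Prop :=
  ∀ s t : ℝ, s ∈ Set.Icc (-d) d → t ∈ Set.Icc (-d) d → dist (γ s) (γ t) = |s - t|

/-- `f` is F(-1)-convex in the barrier sense: along every geodesic it is dominated by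
every solution `g` of `g'' - g = 0` (i.e. `g t = A cosh t + B sinh t`) agreeing with
`f ∘ γ` at the endpoints. -/
def FMinusOneConvex {X : Type*} [MetricSpace X] (f : X → ℝ) : Prop :=
  ∀ d : ℝ, 0 ≤ d → ∀ γ : ℝ → X, IsGeodesicOn γ d →
    ∀ A B : ℝ,
      A * Real.cosh (-d) + B * Real.sinh (-d) = f (γ (-d)) →
      A * Real.cosh d + B * Real.sinh d = f (γ d) →
      ∀ t ∈ Set.Icc (-d) d, f (γ t) ≤ A * Real.cosh t + B * Real.sinh t

theorem barrier_bound' (a b d R : ℝ) (hd : 0 < d) (hR0 : 0 ≤ R) (hR : R ≤ 2*d)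
    (hb0 : 0 ≤ b) (hba : b ≤ a) :
    (a+b)/(2*Real.cosh d) * Real.cosh (R-d) + (b-a)/(2*Real.sinh d) * Real.sinh (R-d)
      ≤ a * (Real.exp (-R) + Real.sinh R / Real.sinh (2*d)) := by
  have hc : 0 < Real.cosh d := Real.cosh_pos d
  have hs : 0 < Real.sinh d := Real.sinh_pos_iff.mpr hd
  have hs2 : 0 < Real.sinh (2*d) := Real.sinh_pos_iff.mpr (by linarith)
  have key : Real.cosh d ^ 2 - Real.sinh d ^ 2 = 1 := Real.cosh_sq_sub_sinh_sq d
  have hEq : (a+b)/(2*Real.cosh d) * Real.cosh (R-d) + (b-a)/(2*Real.sinh d) * Real.sinh (R-d)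
      = (a * Real.sinh (2*d - R) + b * Real.sinh R) / Real.sinh (2*d) := by
    rw [Real.cosh_sub, Real.sinh_sub, show (2*d - R) = (d + d) - R by ring, Real.sinh_sub,
      Real.sinh_add, Real.cosh_add, show (2:ℝ)*d = d + d by ring, Real.sinh_add]
    field_simp
    linear_combination (2*b*Real.sinh R) * key
  have h1 : Real.sinh (2*d - R) ≤ Real.exp (-R) * Real.sinh (2*d) := by
    rw [Real.sinh_sub]
    nlinarith [Real.sinh_nonneg_iff.mpr hR0, Real.cosh_sub_sinh R, Real.sinh_lt_cosh (2*d)]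
  have ha : 0 ≤ a := le_trans hb0 hba
  have hsR : 0 ≤ Real.sinh R := Real.sinh_nonneg_iff.mpr hR0
  rw [hEq, div_le_iff₀ hs2]
  have hrw : a*(Real.exp (-R) + Real.sinh R / Real.sinh (2*d)) * Real.sinh (2*d)
      = a*Real.exp (-R)*Real.sinh (2*d) + a*Real.sinh R := by field_simp
  rw [hrw]
  nlinarith [mul_le_mul_of_nonneg_left h1 ha, mul_le_mul_of_nonneg_right hba hsR]

theorem tail_bound' (d R : ℝ) (hR : 0 < R) (hRd : R ≤ d) :
    Real.sinh R / Real.sinh (2*d) ≤ Real.exp (-R) := by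
  have hsR : 0 < Real.sinh R := Real.sinh_pos_iff.mpr hR
  have hs2R : 0 < Real.sinh (2*R) := Real.sinh_pos_iff.mpr (by linarith)
  have hs2d : 0 < Real.sinh (2*d) := Real.sinh_pos_iff.mpr (by linarith)
  have hmono : Real.sinh (2*R) ≤ Real.sinh (2*d) := Real.sinh_le_sinh.mpr (by linarith)
  have h1 : Real.sinh R / Real.sinh (2*d) ≤ Real.sinh R / Real.sinh (2*R) :=
    div_le_div_of_nonneg_left hsR.le hs2R hmono
  have h2 : Real.sinh R / Real.sinh (2*R) = 1/(2*Real.cosh R) := by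
    rw [Real.sinh_two_mul]
    field_simp
  have hexp1 : Real.exp (-R) * Real.exp R = 1 := by rw [← Real.exp_add]; simp
  have h3 : 1/(2*Real.cosh R) ≤ Real.exp (-R) := by
    rw [div_le_iff₀ (by positivity)]
    rw [Real.cosh_eq]
    nlinarith [Real.exp_pos (-R), Real.exp_pos R, sq_nonneg (Real.exp (-R))]
  calc Real.sinh R / Real.sinh (2*d) ≤ Real.sinh R / Real.sinh (2*R) := h1
    _ = 1/(2*Real.cosh R) := h2
    _ ≤ Real.exp (-R) := h3

theorem minimizers_converge {X : Type*} [MetricSpace X] [ProperSpace X] [Nonempty X]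
    (hgeo : ∀ x y : X, ∃ γ : ℝ → X, IsGeodesicOn γ (dist x y / 2) ∧
      γ (-(dist x y / 2)) = x ∧ γ (dist x y / 2) = y)
    (F : ℕ → X → ℝ) (f : X → ℝ)
    (hFcont : ∀ n, Continuous (F n)) (hcont : Continuous f)
    (hFpos : ∀ n x, 0 < F n x) (hpos : ∀ x, 0 < f x)
    (hFproper : ∀ n, ∀ K : Set ℝ, IsCompact K → IsCompact (F n ⁻¹' K))
    (hproper : ∀ K : Set ℝ, IsCompact K → IsCompact (f ⁻¹' K))
    (hFconv : ∀ n, FMinusOneConvex (F n)) (hconv : FMinusOneConvex f)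
    (x : ℕ → X) (x₀ : X)
    (hxn : ∀ n, IsMinOn (F n) Set.univ (x n))
    (hxnuniq : ∀ n y, IsMinOn (F n) Set.univ y → y = x n)
    (hx₀ : IsMinOn f Set.univ x₀)
    (hx₀uniq : ∀ y, IsMinOn f Set.univ y → y = x₀)
    (hunif : ∀ K : Set X, IsCompact K →
      TendstoUniformlyOn (fun n z => F n z) f atTop K) :
    Tendsto x atTop (𝓝 x₀) := by
  have hFmin : ∀ n z, F n (x n) ≤ F n z := fun n z => isMinOn_iff.mp (hxn n) z (Set.mem_univ z)
  have hfmin : ∀ z, f x₀ ≤ f z := fun z => isMinOn_iff.mp hx₀ z (Set.mem_univ z)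
  set m := f x₀ with hmdef
  have hm0 : 0 < m := hpos x₀
  set R : ℝ := max 1 (Real.log (8*(m+1)/m)) with hRdef
  have hR1 : (1:ℝ) ≤ R := le_max_left _ _
  have hRe : 2*(m+1)*Real.exp (-R) ≤ m/4 := by
    have h8 : (0:ℝ) < 8*(m+1)/m := by positivity
    have hle : 8*(m+1)/m ≤ Real.exp R := by
      calc 8*(m+1)/m = Real.exp (Real.log (8*(m+1)/m)) := (Real.exp_log h8).symm
        _ ≤ Real.exp R := Real.exp_le_exp.mpr (le_max_right _ _)
    have h2 : 8*(m+1) ≤ m * Real.exp R := by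
      rw [div_le_iff₀ hm0] at hle
      linarith
    have hepos : (0:ℝ) < Real.exp R := Real.exp_pos R
    rw [Real.exp_neg, ← div_eq_mul_inv, div_le_iff₀ hepos]
    nlinarith
  have hcompA : IsCompact (Metric.closedBall x₀ (2*R)) := isCompact_closedBall x₀ _
  have hEA : ∀ᶠ n in atTop, ∀ z ∈ Metric.closedBall x₀ (2*R),
      dist (F n z) (f z) < min (m/4) 1 := by
    have := (Metric.tendstoUniformlyOn_iff.mp (hunif _ hcompA)) (min (m/4) 1)
      (lt_min (by positivity) one_pos)
    filter_upwards [this] with n hn z hz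
    rw [dist_comm]; exact hn z hz
  have hbound : ∀ᶠ n in atTop, dist x₀ (x n) ≤ 2*R := by
    filter_upwards [hEA] with n hn
    by_contra hfar
    push_neg at hfar
    obtain ⟨γ, hγ, hγ0, hγ1⟩ := hgeo x₀ (x n)
    set d := dist x₀ (x n) / 2 with hddef
    have hRd : R < d := by rw [hddef]; linarith
    have hd0 : 0 < d := by linarith
    have hmem0 : -d ∈ Set.Icc (-d) d := ⟨le_refl _, by linarith⟩
    have hmemt : R - d ∈ Set.Icc (-d) d := ⟨by linarith, by linarith⟩
    set y := γ (R - d) with hydef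
    have hdy : dist x₀ y = R := by
      have h := hγ (-d) (R-d) hmem0 hmemt
      rw [hγ0] at h
      rw [hydef, h, show -d - (R - d) = -R by ring, abs_neg, abs_of_nonneg (by linarith)]
    set a := F n x₀ with hadef
    set b := F n (x n) with hbdef
    have hba : b ≤ a := hFmin n x₀
    have hb0 : 0 < b := hFpos n _
    have hcpos : 0 < Real.cosh d := Real.cosh_pos d
    have hspos : 0 < Real.sinh d := Real.sinh_pos_iff.mpr hd0
    have hA : (a+b)/(2*Real.cosh d) * Real.cosh (-d) + (b-a)/(2*Real.sinh d) * Real.sinh (-d)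
        = F n (γ (-d)) := by
      rw [hγ0, Real.cosh_neg, Real.sinh_neg, ← hadef]
      field_simp
      ring
    have hB : (a+b)/(2*Real.cosh d) * Real.cosh d + (b-a)/(2*Real.sinh d) * Real.sinh d
        = F n (γ d) := by
      rw [hγ1, ← hbdef]
      field_simp
      ring
    have hconvapp := hFconv n d hd0.le γ hγ ((a+b)/(2*Real.cosh d)) ((b-a)/(2*Real.sinh d))
      hA hB (R-d) hmemt
    have hle := barrier_bound' a b d R hd0 (by linarith) (by linarith) hb0.le hba
    have htail : Real.sinh R / Real.sinh (2*d) ≤ Real.exp (-R) :=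
      tail_bound' d R (by linarith) hRd.le
    have ha0 : 0 ≤ a := le_trans hb0.le hba
    have hFy : F n y ≤ 2*a*Real.exp (-R) := by
      calc F n y ≤ (a+b)/(2*Real.cosh d) * Real.cosh (R-d)
            + (b-a)/(2*Real.sinh d) * Real.sinh (R-d) := hconvapp
        _ ≤ a * (Real.exp (-R) + Real.sinh R / Real.sinh (2*d)) := hle
        _ ≤ 2*a*Real.exp (-R) := by nlinarith
    have hx₀mem : x₀ ∈ Metric.closedBall x₀ (2*R) := Metric.mem_closedBall_self (by linarith)
    have haub : a ≤ m + 1 := by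
      have h := lt_of_lt_of_le (hn x₀ hx₀mem) (min_le_right _ _)
      rw [Real.dist_eq] at h
      have := abs_lt.mp h
      rw [← hadef, ← hmdef] at this
      linarith [this.2]
    have hymem : y ∈ Metric.closedBall x₀ (2*R) := by
      rw [Metric.mem_closedBall, dist_comm, hdy]; linarith
    have hfy : m ≤ f y := hfmin y
    have hclose := lt_of_lt_of_le (hn y hymem) (min_le_left _ _)
    rw [Real.dist_eq] at hclose
    have hcl := abs_lt.mp hclose
    have h2a : 2*a*Real.exp (-R) ≤ 2*(m+1)*Real.exp (-R) := by
      nlinarith [Real.exp_pos (-R)]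
    linarith [hcl.1, hcl.2]
  rw [Metric.tendsto_nhds]
  intro ε hε
  set S := Metric.closedBall x₀ (2*R) \ Metric.ball x₀ ε with hSdef
  have hSc : IsCompact S := hcompA.diff Metric.isOpen_ball
  have hmemS : ∀ n, dist x₀ (x n) ≤ 2*R → ¬ dist (x n) x₀ < ε → x n ∈ S := by
    intro n h1 h2
    exact ⟨by rw [Metric.mem_closedBall, dist_comm]; exact h1,
      by rw [Metric.mem_ball]; exact h2⟩
  rcases Set.eq_empty_or_nonempty S with hSe | hSne
  · filter_upwards [hbound] with n hn
    by_contra hge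
    have := hmemS n hn hge
    rw [hSe] at this
    exact this
  · obtain ⟨z, hzS, hzmin⟩ := hSc.exists_isMinOn hSne hcont.continuousOn
    have hzball : ¬ dist z x₀ < ε := fun h => hzS.2 (Metric.mem_ball.mpr h)
    have hz0 : z ≠ x₀ := by
      intro h
      apply hzball
      rw [h, dist_self]
      exact hε
    have hzgt : m < f z := by
      rcases lt_or_ge m (f z) with h | h
      · exact h
      · exfalso
        have hfz : f z = m := le_antisymm h (hfmin z)
        have : IsMinOn f Set.univ z := by
          intro w _
          simp only [Set.mem_setOf_eq]
          rw [hfz]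
          exact hfmin w
        exact hz0 (hx₀uniq z this)
    set δ := (f z - m)/2 with hδdef
    have hδ0 : 0 < δ := by rw [hδdef]; linarith
    have hEB : ∀ᶠ n in atTop, ∀ w ∈ Metric.closedBall x₀ (2*R),
        dist (F n w) (f w) < δ := by
      have := (Metric.tendstoUniformlyOn_iff.mp (hunif _ hcompA)) δ hδ0
      filter_upwards [this] with n hn w hw
      rw [dist_comm]; exact hn w hw
    filter_upwards [hbound, hEB] with n hn1 hn2
    by_contra hge
    have hxS : x n ∈ S := hmemS n hn1 hge
    have h1 : f z ≤ f (x n) := isMinOn_iff.mp hzmin (x n) hxS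
    have h2 := hn2 (x n) (by rw [Metric.mem_closedBall, dist_comm]; exact hn1)
    have h3 := hn2 x₀ (Metric.mem_closedBall_self (by linarith))
    rw [Real.dist_eq] at h2 h3
    have h2' := abs_lt.mp h2
    have h3' := abs_lt.mp h3
    have h4 : F n (x n) ≤ F n x₀ := hFmin n x₀
    rw [← hmdef] at h3'
    have := h2'.1
    have := h3'.2
    linarith [h2'.1, h3'.2]
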